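/- arXiv:2306.08800 — 2 statements merged into one kernel-verified Lean document; each statement's English description precedes it below -/
import Mathlib

section
/- Let (X,d) be a Robinson space with |X| ≥ 3 in which all mmodules are trivial (the only mmodules are ∅, X, and the singletons {x} for x ∈ X). Then (X,d) is flat: it has exactly two compatible orders, each the reverse of the other. -/
structure Dissim (X : Type*) where
  d : X → X → ℝ
  symm : ∀ x y, d x y = d y x
  nonneg : ∀ x y, 0 ≤ d x y
  self : ∀ x, d x x = 0

variable {X : Type*}

def Compatible (D : Dissim X) (lt : X → X → Prop) : Prop :=
  ∀ x y z : X, lt x y → lt y z → D.d x y ≤ D.d x z ∧ D.d y z ≤ D.d x z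

def IsCompatOrder (D : Dissim X) (lt : X → X → Prop) : Prop :=
  IsStrictTotalOrder X lt ∧ Compatible D lt

def Robinson (D : Dissim X) : Prop :=
  ∃ lt : X → X → Prop, IsCompatOrder D lt

def IsMmodule (D : Dissim X) (M : Set X) : Prop :=
  ∀ z ∉ M, ∀ x ∈ M, ∀ y ∈ M, D.d z x = D.d z y

def IsInterval (lt : X → X → Prop) (I : Set X) : Prop :=
  ∀ a b c : X, lt a b → lt b c → a ∈ I → c ∈ I → b ∈ I

def IsBlock (D : Dissim X) (Y : Set X) : Prop :=
  ∀ lt : X → X → Prop, IsCompatOrder D lt → IsInterval lt Y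

noncomputable def diam (D : Dissim X) (Y : Set X) : ℝ :=
  sSup (Set.image2 D.d Y Y)

def Gdelta (D : Dissim X) (δ : ℝ) : SimpleGraph X where
  Adj x y := x ≠ y ∧ D.d x y ≠ δ
  symm := by
    constructor
    rintro x y ⟨hxy, hd⟩
    exact ⟨hxy.symm, by rw [D.symm]; exact hd⟩
  loopless := by constructor; rintro x ⟨h, -⟩; exact h rfl

def Gle (D : Dissim X) (δ : ℝ) : SimpleGraph X where
  Adj x y := x ≠ y ∧ D.d x y ≤ δ
  symm := by
    constructor
    rintro x y ⟨hxy, hd⟩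
    exact ⟨hxy.symm, by rw [D.symm]; exact hd⟩
  loopless := by constructor; rintro x ⟨h, -⟩; exact h rfl

def Glt (D : Dissim X) (δ : ℝ) : SimpleGraph X where
  Adj x y := x ≠ y ∧ D.d x y < δ
  symm := by
    constructor
    rintro x y ⟨hxy, hd⟩
    exact ⟨hxy.symm, by rw [D.symm]; exact hd⟩
  loopless := by constructor; rintro x ⟨h, -⟩; exact h rfl

def IsCompOf {V : Type*} (G : SimpleGraph V) (C : Set V) : Prop :=
  ∃ x : V, C = {y | G.Reachable x y}

def MMax (D : Dissim X) : Set (Set X) :=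
  {M | IsMmodule D M ∧ M ≠ Set.univ ∧
    ∀ M' : Set X, IsMmodule D M' → M' ≠ Set.univ → M ⊆ M' → M = M'}

def IsPartition {α : Type*} (P : Set (Set α)) : Prop :=
  (∀ A ∈ P, A.Nonempty) ∧
  (∀ A ∈ P, ∀ B ∈ P, A ≠ B → Disjoint A B) ∧
  ⋃₀ P = Set.univ

def IsCopartition {α : Type*} (P : Set (Set α)) : Prop :=
  IsPartition ((fun M => Mᶜ) '' P)

def SimpleGraph.restrictTo {V : Type*} (G : SimpleGraph V) (S : Set V) : SimpleGraph V where
  Adj x y := x ∈ S ∧ y ∈ S ∧ G.Adj x y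
  symm := by constructor; rintro x y ⟨hx, hy, h⟩; exact ⟨hy, hx, h.symm⟩
  loopless := by constructor; rintro x ⟨-, -, h⟩; exact (G.ne_of_adj h) rfl

def ConnectedWithin {V : Type*} (G : SimpleGraph V) (S : Set V) : Prop :=
  S.Nonempty ∧ ∀ x ∈ S, ∀ y ∈ S, (G.restrictTo S).Reachable x y

def IsCompWithin {V : Type*} (G : SimpleGraph V) (S : Set V) (C : Set V) : Prop :=
  ∃ x ∈ S, C = {y | (G.restrictTo S).Reachable x y}

def IsStrictTotalOrderOn {α : Type*} (S : Set α) (lt : α → α → Prop) : Prop :=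
  (∀ x ∈ S, ¬ lt x x) ∧
  (∀ x ∈ S, ∀ y ∈ S, ∀ z ∈ S, lt x y → lt y z → lt x z) ∧
  (∀ x ∈ S, ∀ y ∈ S, x ≠ y → (lt x y ∨ lt y x) ∧ ¬ (lt x y ∧ lt y x))

def CompatibleOn (D : Dissim X) (S : Set X) (lt : X → X → Prop) : Prop :=
  ∀ x ∈ S, ∀ y ∈ S, ∀ z ∈ S, lt x y → lt y z → D.d x y ≤ D.d x z ∧ D.d y z ≤ D.d x z

def IsCompatOrderOn (D : Dissim X) (S : Set X) (lt : X → X → Prop) : Prop :=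
  IsStrictTotalOrderOn S lt ∧ CompatibleOn D S lt

def FlatOn (D : Dissim X) (S : Set X) : Prop :=
  ∃ lt : X → X → Prop, IsCompatOrderOn D S lt ∧ (∃ x ∈ S, ∃ y ∈ S, lt x y) ∧
    ∀ lt' : X → X → Prop, IsCompatOrderOn D S lt' →
      (∀ x ∈ S, ∀ y ∈ S, (lt' x y ↔ lt x y)) ∨ (∀ x ∈ S, ∀ y ∈ S, (lt' x y ↔ lt y x))

def Flat (D : Dissim X) : Prop :=
  ∃ lt : X → X → Prop, IsCompatOrder D lt ∧ (∃ x y : X, lt x y) ∧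
    ∀ lt' : X → X → Prop, IsCompatOrder D lt' →
      (∀ x y : X, lt' x y ↔ lt x y) ∨ (∀ x y : X, lt' x y ↔ lt y x)

def IsCopointAt (D : Dissim X) (p : X) (C : Set X) : Prop :=
  IsMmodule D C ∧ C.Nonempty ∧ p ∉ C ∧
  ∀ C' : Set X, IsMmodule D C' → p ∉ C' → C ⊆ C' → C = C'

def bigGraph (D : Dissim X) (δ : ℝ) (I : Set (Set X)) : SimpleGraph (Set X) where
  Adj C C' := C ∈ I ∧ C' ∈ I ∧ C ≠ C' ∧ ∃ x ∈ C, ∃ y ∈ C', δ < D.d x y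
  symm := by
    constructor
    rintro C C' ⟨hC, hC', hne, x, hx, y, hy, hd⟩
    exact ⟨hC', hC, hne.symm, y, hy, x, hx, by rw [D.symm]; exact hd⟩
  loopless := by constructor; rintro C ⟨-, -, hne, -⟩; exact hne rfl


namespace Stmt2Aux

variable {X : Type*}

/-- `a ≤ b` with respect to a strict order `lt`. -/
def LEr (lt : X → X → Prop) (a b : X) : Prop := lt a b ∨ a = b

lemma sto_facts {lt : X → X → Prop} (h : IsStrictTotalOrder X lt) :
    (∀ x y : X, x ≠ y → lt x y ∨ lt y x) ∧ (∀ x y z : X, lt x y → lt y z → lt x z) ∧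
    (∀ x y : X, lt x y → lt y x → False) ∧ (∀ x : X, ¬ lt x x) := by
  haveI := h
  refine ⟨?_, ?_, ?_, ?_⟩
  · intro x y hxy
    rcases trichotomous_of lt x y with h1 | h1 | h1
    · exact Or.inl h1
    · exact absurd h1 hxy
    · exact Or.inr h1
  · intro x y z h1 h2; exact trans_of lt h1 h2
  · intro x y h1 h2; exact irrefl_of lt x (trans_of lt h1 h2)
  · intro x; exact irrefl_of lt x

lemma exists_min (lt : X → X → Prop)
    (htot : ∀ x y : X, x ≠ y → lt x y ∨ lt y x)
    (htrans : ∀ x y z : X, lt x y → lt y z → lt x z)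
    (s : Finset X) : s.Nonempty → ∃ m ∈ s, ∀ x ∈ s, x ≠ m → lt m x := by
  classical
  induction s using Finset.induction_on with
  | empty => intro h; simp at h
  | @insert a s ha ih =>
    intro _
    by_cases hs : s.Nonempty
    · obtain ⟨m, hm, hmin⟩ := ih hs
      have ham : a ≠ m := fun h => ha (h ▸ hm)
      rcases htot a m ham with h1 | h1
      · refine ⟨a, Finset.mem_insert_self _ _, ?_⟩
        intro x hx hxa
        rcases Finset.mem_insert.mp hx with rfl | hx
        · exact absurd rfl hxa
        · by_cases hxm : x = m
          · exact hxm ▸ h1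
          · exact htrans _ _ _ h1 (hmin x hx hxm)
      · refine ⟨m, Finset.mem_insert_of_mem hm, ?_⟩
        intro x hx hxm
        rcases Finset.mem_insert.mp hx with rfl | hx
        · exact h1
        · exact hmin x hx hxm
    · have hse : s = ∅ := Finset.not_nonempty_iff_eq_empty.mp hs
      subst hse
      refine ⟨a, Finset.mem_insert_self _ _, ?_⟩
      intro x hx hxa
      simp only [Finset.mem_insert, Finset.notMem_empty, or_false] at hx
      exact absurd hx hxa

lemma between {D : Dissim X} {lt : X → X → Prop} (hc : Compatible D lt)
    (htrans : ∀ x y z : X, lt x y → lt y z → lt x z)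
    {w a u b : X} (h1 : LEr lt a u) (h2 : LEr lt u b)
    (hwa : lt w a) (hconst : D.d w a = D.d w b) :
    D.d w u = D.d w a := by
  rcases h1 with h1 | rfl
  · rcases h2 with h2 | rfl
    · exact le_antisymm (((hc w u b (htrans _ _ _ hwa h1) h2).1).trans hconst.ge)
        ((hc w a u hwa h1).1)
    · exact hconst.symm
  · rfl

lemma between' {D : Dissim X} {lt : X → X → Prop} (hc : Compatible D lt)
    (htrans : ∀ x y z : X, lt x y → lt y z → lt x z)
    {a u b w : X} (h1 : LEr lt a u) (h2 : LEr lt u b)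
    (hbw : lt b w) (hconst : D.d a w = D.d b w) :
    D.d u w = D.d a w := by
  rcases h1 with h1 | rfl
  · rcases h2 with h2 | rfl
    · exact le_antisymm ((hc a u w h1 (htrans _ _ _ h2 hbw)).2)
        (hconst.le.trans (hc u b w h2 hbw).2)
    · exact hconst.symm
  · rfl

/-- The key set: union of the interval `[x0, y0]` for `lt` and `[y0, x0]` for `lt'`. -/
def Mset (lt lt' : X → X → Prop) (x0 y0 : X) : Set X :=
  {z | (LEr lt x0 z ∧ LEr lt z y0) ∨ (LEr lt' y0 z ∧ LEr lt' z x0)}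

lemma x0_mem_Mset (lt lt' : X → X → Prop) {x0 y0 : X} (hxy : lt x0 y0) :
    x0 ∈ Mset lt lt' x0 y0 := Or.inl ⟨Or.inr rfl, Or.inl hxy⟩

lemma y0_mem_Mset (lt lt' : X → X → Prop) {x0 y0 : X} (hxy : lt x0 y0) :
    y0 ∈ Mset lt lt' x0 y0 := Or.inl ⟨Or.inl hxy, Or.inr rfl⟩

lemma core_mmodule (D : Dissim X) {lt lt' : X → X → Prop}
    (h : IsCompatOrder D lt) (h' : IsCompatOrder D lt') {x0 y0 : X}
    (hxy : lt x0 y0) (hxy' : lt' y0 x0)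
    (hA : ∀ w, lt w x0 → lt' w y0)
    (hB : ∀ w, lt y0 w → ¬ lt' w y0) :
    IsMmodule D (Mset lt lt' x0 y0) := by
  obtain ⟨htot, htrans, hasym, hirr⟩ := sto_facts h.1
  obtain ⟨htot', htrans', hasym', hirr'⟩ := sto_facts h'.1
  have hc := h.2
  have hc' := h'.2
  intro w hw x hx y hy
  have hwpos : lt w x0 ∨ (lt y0 w ∧ lt' x0 w) := by
    have hwx0 : w ≠ x0 := fun he => hw (by rw [he]; exact x0_mem_Mset lt lt' hxy)
    have hwy0 : w ≠ y0 := fun he => hw (by rw [he]; exact y0_mem_Mset lt lt' hxy)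
    rcases htot w x0 hwx0 with h1 | h1
    · exact Or.inl h1
    · have h2 : lt y0 w := by
        rcases htot w y0 hwy0 with h2 | h2
        · exact absurd (Or.inl ⟨Or.inl h1, Or.inl h2⟩) hw
        · exact h2
      have h3 : lt' x0 w := by
        rcases htot' x0 w (Ne.symm hwx0) with h3 | h3
        · exact h3
        · rcases htot' w y0 hwy0 with h4 | h4
          · exact absurd h4 (hB w h2)
          · exact absurd (Or.inr ⟨Or.inl h4, Or.inl h3⟩) hw
      exact Or.inr ⟨h2, h3⟩
  have key : ∀ u ∈ Mset lt lt' x0 y0, D.d w u = D.d w x0 := by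
    intro u hu
    rcases hwpos with hL | ⟨hR1, hR2⟩
    · have hwy0' : lt' w y0 := hA w hL
      have hconst : D.d w x0 = D.d w y0 :=
        le_antisymm (hc w x0 y0 hL hxy).1 (hc' w y0 x0 hwy0' hxy').1
      rcases hu with ⟨hu1, hu2⟩ | ⟨hu1, hu2⟩
      · exact between hc htrans hu1 hu2 hL hconst
      · exact (between hc' htrans' hu1 hu2 hwy0' hconst.symm).trans hconst.symm
    · have hconst : D.d x0 w = D.d y0 w :=
        le_antisymm (hc' y0 x0 w hxy' hR2).2 (hc x0 y0 w hxy hR1).2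
      rcases hu with ⟨hu1, hu2⟩ | ⟨hu1, hu2⟩
      · rw [D.symm w u, D.symm w x0]
        exact between' hc htrans hu1 hu2 hR1 hconst
      · rw [D.symm w u, D.symm w x0]
        exact (between' hc' htrans' hu1 hu2 hR2 hconst.symm).trans hconst.symm
  exact (key x hx).trans (key y hy).symm

lemma mset_univ (D : Dissim X)
    (htriv : ∀ M : Set X, IsMmodule D M → M = ∅ ∨ M = Set.univ ∨ ∃ x : X, M = {x})
    {lt lt' : X → X → Prop}
    (h : IsCompatOrder D lt) (h' : IsCompatOrder D lt') {x0 y0 : X}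
    (hxy : lt x0 y0) (hxy' : lt' y0 x0)
    (hA : ∀ w, lt w x0 → lt' w y0)
    (hB : ∀ w, lt y0 w → ¬ lt' w y0) :
    Mset lt lt' x0 y0 = Set.univ := by
  obtain ⟨htot, htrans, hasym, hirr⟩ := sto_facts h.1
  have hm := core_mmodule D h h' hxy hxy' hA hB
  rcases htriv _ hm with h1 | h1 | ⟨a, h1⟩
  · exact absurd (h1 ▸ x0_mem_Mset lt lt' hxy) (Set.notMem_empty x0)
  · exact h1
  · exfalso
    have hx0 : x0 ∈ ({a} : Set X) := h1 ▸ x0_mem_Mset lt lt' hxy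
    have hy0 : y0 ∈ ({a} : Set X) := h1 ▸ y0_mem_Mset lt lt' hxy
    rw [Set.mem_singleton_iff] at hx0 hy0
    exact hirr x0 (by rw [hx0, ← hy0] at hxy ⊢; exact hxy)

lemma same_min [Fintype X] (D : Dissim X)
    (htriv : ∀ M : Set X, IsMmodule D M → M = ∅ ∨ M = Set.univ ∨ ∃ x : X, M = {x})
    {lt lt' : X → X → Prop}
    (h : IsCompatOrder D lt) (h' : IsCompatOrder D lt')
    {p : X} (hp : ∀ x, x ≠ p → lt p x) (hp' : ∀ x, x ≠ p → lt' p x) :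
    ∀ x y, lt x y ↔ lt' x y := by
  classical
  obtain ⟨htot, htrans, hasym, hirr⟩ := sto_facts h.1
  obtain ⟨htot', htrans', hasym', hirr'⟩ := sto_facts h'.1
  have main : ∀ a b, lt a b → lt' a b := by
    by_contra hcon
    push_neg at hcon
    obtain ⟨a, b, hab, hnab⟩ := hcon
    have habne : a ≠ b := fun he => hirr a (he ▸ hab)
    have hba : lt' b a := (htot' a b habne).resolve_left hnab
    set S : Finset X := Finset.univ.filter (fun x => ∃ y, lt x y ∧ lt' y x) with hS
    have hSne : S.Nonempty := by
      refine ⟨a, ?_⟩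
      simp only [hS, Finset.mem_filter, Finset.mem_univ, true_and]
      exact ⟨b, hab, hba⟩
    obtain ⟨x0, hx0S, hx0min⟩ := exists_min lt htot htrans S hSne
    have hx0S' : ∃ y, lt x0 y ∧ lt' y x0 := by
      simpa only [hS, Finset.mem_filter, Finset.mem_univ, true_and] using hx0S
    set T : Finset X := Finset.univ.filter (fun y => lt x0 y ∧ lt' y x0) with hT
    have hTne : T.Nonempty := by
      obtain ⟨y, hy1, hy2⟩ := hx0S'
      refine ⟨y, ?_⟩
      simp only [hT, Finset.mem_filter, Finset.mem_univ, true_and]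
      exact ⟨hy1, hy2⟩
    obtain ⟨y0, hy0T, hy0max⟩ := exists_min (fun a b => lt b a)
      (fun x y hne => (htot x y hne).symm)
      (fun x y z h1 h2 => htrans z y x h2 h1) T hTne
    have hy0T' : lt x0 y0 ∧ lt' y0 x0 := by
      simpa only [hT, Finset.mem_filter, Finset.mem_univ, true_and] using hy0T
    obtain ⟨hxy, hxy'⟩ := hy0T'
    have hA : ∀ w, lt w x0 → lt' w y0 := by
      intro w hw
      by_contra hcon2
      have hwy0 : lt w y0 := htrans _ _ _ hw hxy
      have hwy0ne : w ≠ y0 := fun he => hirr w (he ▸ hwy0)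
      have h4 : lt' y0 w := (htot' w y0 hwy0ne).resolve_left hcon2
      have hwS : w ∈ S := by
        simp only [hS, Finset.mem_filter, Finset.mem_univ, true_and]
        exact ⟨y0, hwy0, h4⟩
      have hwx0ne : w ≠ x0 := fun he => hirr w (he ▸ hw)
      exact hasym _ _ hw (hx0min w hwS hwx0ne)
    have hB : ∀ w, lt y0 w → ¬ lt' w y0 := by
      intro w h1 h2
      have hwT : w ∈ T := by
        simp only [hT, Finset.mem_filter, Finset.mem_univ, true_and]
        exact ⟨htrans _ _ _ hxy h1, htrans' _ _ _ h2 hxy'⟩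
      have hwy0ne : w ≠ y0 := fun he => hirr y0 (by rw [he] at h1; exact h1)
      exact hasym _ _ h1 (hy0max w hwT hwy0ne)
    have huniv := mset_univ D htriv h h' hxy hxy' hA hB
    have hpM : p ∈ Mset lt lt' x0 y0 := huniv ▸ Set.mem_univ p
    rcases hpM with ⟨h1, h2⟩ | ⟨h1, h2⟩
    · rcases h1 with h1 | h1
      · have : x0 ≠ p := fun he => hirr x0 (he ▸ h1)
        exact hasym _ _ h1 (hp x0 this)
      · have hy0p : y0 ≠ p := fun he => hirr' p (by rw [he, h1] at hxy'; exact hxy')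
        exact hasym' _ _ (h1 ▸ hxy') (hp' y0 hy0p)
    · rcases h1 with h1 | h1
      · have hy0p : y0 ≠ p := fun he => hirr' y0 (he ▸ h1)
        exact hasym' _ _ h1 (hp' y0 hy0p)
      · have hx0p : x0 ≠ p := fun he => hirr p (by rw [he, h1] at hxy; exact hxy)
        exact hasym _ _ (h1 ▸ hxy) (hp x0 hx0p)
  intro x y
  constructor
  · exact main x y
  · intro hxy'
    have hne : x ≠ y := fun he => hirr' x (he ▸ hxy')
    rcases htot x y hne with h1 | h1
    · exact h1
    · exact absurd (main y x h1) (fun h2 => hasym' _ _ hxy' h2)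

lemma push_out [Fintype X] (D : Dissim X)
    (htriv : ∀ M : Set X, IsMmodule D M → M = ∅ ∨ M = Set.univ ∨ ∃ x : X, M = {x})
    {lt lt' : X → X → Prop}
    (h : IsCompatOrder D lt) (h' : IsCompatOrder D lt')
    {p q : X} (hp : ∀ x, x ≠ p → lt p x) (hq : lt' q p) :
    ∃ y, lt' y p ∧ ∀ z, LEr lt z y ∨ LEr lt' z p := by
  classical
  obtain ⟨htot, htrans, hasym, hirr⟩ := sto_facts h.1
  obtain ⟨htot', htrans', hasym', hirr'⟩ := sto_facts h'.1
  set T : Finset X := Finset.univ.filter (fun y => lt' y p) with hT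
  have hTne : T.Nonempty := by
    refine ⟨q, ?_⟩
    simp only [hT, Finset.mem_filter, Finset.mem_univ, true_and]
    exact hq
  obtain ⟨y0, hy0T, hy0max⟩ := exists_min (fun a b => lt b a)
    (fun x y hne => (htot x y hne).symm)
    (fun x y z h1 h2 => htrans z y x h2 h1) T hTne
  have hy0p : lt' y0 p := by
    simpa only [hT, Finset.mem_filter, Finset.mem_univ, true_and] using hy0T
  have hy0ne : y0 ≠ p := fun he => hirr' y0 (he ▸ hy0p)
  have hxy : lt p y0 := hp y0 hy0ne
  have hA : ∀ w, lt w p → lt' w y0 := by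
    intro w hw
    exact absurd hw (fun hw => hasym _ _ hw (hp w (fun he => hirr w (he ▸ hw))))
  have hB : ∀ w, lt y0 w → ¬ lt' w y0 := by
    intro w h1 h2
    have hwT : w ∈ T := by
      simp only [hT, Finset.mem_filter, Finset.mem_univ, true_and]
      exact htrans' _ _ _ h2 hy0p
    have hwy0ne : w ≠ y0 := fun he => hirr y0 (by rw [he] at h1; exact h1)
    exact hasym _ _ h1 (hy0max w hwT hwy0ne)
  have huniv := mset_univ D htriv h h' hxy hy0p hA hB
  refine ⟨y0, hy0p, fun z => ?_⟩
  have hzM : z ∈ Mset lt lt' p y0 := huniv ▸ Set.mem_univ z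
  rcases hzM with ⟨-, h2⟩ | ⟨-, h2⟩
  · exact Or.inl h2
  · exact Or.inr h2

lemma flip_compat (D : Dissim X) {lt : X → X → Prop} (h : IsCompatOrder D lt) :
    IsCompatOrder D (fun a b => lt b a) := by
  obtain ⟨htot, htrans, hasym, hirr⟩ := sto_facts h.1
  have hc := h.2
  have hsto : IsStrictTotalOrder X (fun a b => lt b a) :=
    { trichotomous := fun a b h1 h2 => by
        by_contra hab
        rcases htot a b hab with h3 | h3
        · exact h2 h3
        · exact h1 h3
      irrefl := hirr
      trans := fun a b c h1 h2 => htrans c b a h2 h1 }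
  refine ⟨hsto, ?_⟩
  intro x y z h1 h2
  have h3 := hc z y x h2 h1
  constructor
  · rw [D.symm x y, D.symm x z]; exact h3.2
  · rw [D.symm y z, D.symm x z]; exact h3.1

end Stmt2Aux

/-- a Robinson space with at least 3 points in which all mmodules are
trivial is flat. -/
theorem stmt2 [Fintype X] [Nonempty X] (D : Dissim X)
    (hcard : 3 ≤ Fintype.card X)
    (hRob : Robinson D)
    (htriv : ∀ M : Set X, IsMmodule D M → M = ∅ ∨ M = Set.univ ∨ ∃ x : X, M = {x}) :
    Flat D := by
  classical
  obtain ⟨lt, hlt⟩ := hRob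
  obtain ⟨htot, htrans, hasym, hirr⟩ := Stmt2Aux.sto_facts hlt.1
  refine ⟨lt, hlt, ?_, ?_⟩
  · have h1 : 1 < Fintype.card X := by omega
    rw [Fintype.one_lt_card_iff_nontrivial] at h1
    obtain ⟨a, b, hab⟩ := h1.exists_pair_ne
    rcases htot a b hab with h2 | h2
    · exact ⟨a, b, h2⟩
    · exact ⟨b, a, h2⟩
  · intro lt' hlt'
    obtain ⟨htot', htrans', hasym', hirr'⟩ := Stmt2Aux.sto_facts hlt'.1
    obtain ⟨p, -, hp0⟩ := Stmt2Aux.exists_min lt htot htrans Finset.univ Finset.univ_nonempty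
    have hp : ∀ x, x ≠ p → lt p x := fun x hx => hp0 x (Finset.mem_univ x) hx
    by_cases hqe : ∃ q, lt' q p
    · by_cases hre : ∃ r, lt' p r
      · exfalso
        obtain ⟨q, hq⟩ := hqe
        obtain ⟨r, hr⟩ := hre
        obtain ⟨y, hy, H1⟩ := Stmt2Aux.push_out D htriv hlt hlt' hp hq
        obtain ⟨y', hy', H2⟩ :=
          Stmt2Aux.push_out D htriv hlt (Stmt2Aux.flip_compat D hlt') hp hr
        -- hy : lt' y p, hy' : lt' p y'
        have e1 := H1 y'
        have e2 := H2 y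
        have hne : y' ≠ y := fun he => hasym' _ _ hy (he ▸ hy')
        have e1' : Stmt2Aux.LEr lt y' y := by
          rcases e1 with e1 | e1
          · exact e1
          · rcases e1 with e1 | e1
            · exact absurd hy' (fun h2 => hasym' _ _ e1 h2)
            · exact absurd (e1 ▸ hy') (hirr' _)
        have e2' : Stmt2Aux.LEr lt y y' := by
          rcases e2 with e2 | e2
          · exact e2
          · rcases e2 with e2 | e2
            · exact absurd hy (fun h2 => hasym' _ _ e2 h2)
            · exact absurd (e2 ▸ hy) (hirr' _)
        rcases e1' with e1' | e1'
        · rcases e2' with e2' | e2'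
          · exact hasym _ _ e1' e2'
          · exact hirr _ (e2' ▸ e1')
        · exact hne e1'
      · push_neg at hre
        right
        have hp' : ∀ x, x ≠ p → lt' x p := fun x hx =>
          (htot' x p hx).resolve_right (hre x)
        have hiff := Stmt2Aux.same_min D htriv hlt (Stmt2Aux.flip_compat D hlt') hp hp'
        intro x y
        exact (hiff y x).symm
    · push_neg at hqe
      left
      have hp' : ∀ x, x ≠ p → lt' p x := fun x hx =>
        (htot' p x (Ne.symm hx)).resolve_right (hqe x)
      have hiff := Stmt2Aux.same_min D htriv hlt hlt' hp hp'
      intro x y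
      exact (hiff x y).symm
end

section
/- Let (X,d) be a dissimilarity space with |X| ≥ 2. Then M_max, the set of maximal mmodules of (X,d), is either a partition of X or a copartition of X. -/
variable {X : Type*}

lemma mmod_singleton (D : Dissim X) (x : X) : IsMmodule D {x} := by
  intro z _ a ha b hb
  simp only [Set.mem_singleton_iff] at ha hb
  rw [ha, hb]

lemma singleton_ne_univ [Fintype X] (hcard : 2 ≤ Fintype.card X) (x : X) :
    ({x} : Set X) ≠ Set.univ := by
  obtain ⟨a, b, hab⟩ := Fintype.exists_pair_of_one_lt_card hcard
  intro h
  have ha : a ∈ ({x} : Set X) := h ▸ Set.mem_univ a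
  have hb : b ∈ ({x} : Set X) := h ▸ Set.mem_univ b
  simp only [Set.mem_singleton_iff] at ha hb
  exact hab (ha.trans hb.symm)

lemma mmod_union (D : Dissim X) {M M' : Set X} (hM : IsMmodule D M)
    (hM' : IsMmodule D M') (h : (M ∩ M').Nonempty) : IsMmodule D (M ∪ M') := by
  obtain ⟨w, hwM, hwM'⟩ := h
  have key : ∀ z ∉ M ∪ M', ∀ a ∈ M ∪ M', D.d z a = D.d z w := by
    intro z hz a ha
    rcases ha with ha | ha
    · exact hM z (fun hzM => hz (Or.inl hzM)) a ha w hwM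
    · exact hM' z (fun hzM => hz (Or.inr hzM)) a ha w hwM'
  intro z hz a ha b hb
  rw [key z hz a ha, key z hz b hb]

lemma exists_max (D : Dissim X) [Fintype X] {M : Set X}
    (hM : IsMmodule D M) (hne : M ≠ Set.univ) : ∃ N ∈ MMax D, M ⊆ N := by
  have hfin : ({N : Set X | IsMmodule D N ∧ N ≠ Set.univ ∧ M ⊆ N}).Finite :=
    Set.toFinite _
  obtain ⟨N, hN, hmax⟩ := Set.Finite.exists_maximalFor id _ hfin ⟨M, hM, hne, subset_rfl⟩
  refine ⟨N, ⟨hN.1, hN.2.1, ?_⟩, hN.2.2⟩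
  intro M' hM' hM'ne hNM'
  exact le_antisymm hNM' (hmax ⟨hM', hM'ne, hN.2.2.trans hNM'⟩ hNM')

lemma mmax_nonempty (D : Dissim X) [Fintype X] (hcard : 2 ≤ Fintype.card X)
    {M : Set X} (hM : M ∈ MMax D) : M.Nonempty := by
  by_contra h
  rw [Set.not_nonempty_iff_eq_empty] at h
  have : Nonempty X := Fintype.card_pos_iff.mp (by omega)
  inhabit X
  have := hM.2.2 {default} (mmod_singleton D default) (singleton_ne_univ hcard default)
    (h ▸ Set.empty_subset _)
  rw [h] at this
  exact (Set.singleton_ne_empty (default : X)) this.symm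

lemma mmax_union (D : Dissim X) {M M' : Set X} (hM : M ∈ MMax D) (hM' : M' ∈ MMax D)
    (hne : M ≠ M') (hov : (M ∩ M').Nonempty) : M ∪ M' = Set.univ := by
  by_contra h
  have hu : IsMmodule D (M ∪ M') := mmod_union D hM.1 hM'.1 hov
  have h1 := hM.2.2 _ hu h Set.subset_union_left
  have h2 : M' ⊆ M := by rw [h1]; exact Set.subset_union_right
  exact hne (hM'.2.2 M hM.1 hM.2.1 h2).symm

lemma sub_of_union_disj {A B C : Set X} (h : A ∪ B = Set.univ)
    (hd : A ∩ C = ∅) : C ⊆ B := by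
  intro y hy
  have hyu : y ∈ A ∪ B := h ▸ Set.mem_univ y
  rcases hyu with hA | hB
  · exact absurd (Set.mem_inter hA hy) (by rw [hd]; exact Set.notMem_empty y)
  · exact hB

lemma mmax_all_union (D : Dissim X) [Fintype X] (hcard : 2 ≤ Fintype.card X)
    {M1 M2 : Set X} (h1 : M1 ∈ MMax D) (h2 : M2 ∈ MMax D) (h12 : M1 ≠ M2)
    (hov : (M1 ∩ M2).Nonempty) :
    ∀ M ∈ MMax D, ∀ M' ∈ MMax D, M ≠ M' → M ∪ M' = Set.univ := by
  have h12u : M1 ∪ M2 = Set.univ := mmax_union D h1 h2 h12 hov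
  intro M hM M' hM' hMM'
  rcases Set.eq_empty_or_nonempty (M ∩ M') with hd | hnd
  · exfalso
    rcases Set.eq_empty_or_nonempty (M1 ∩ M) with hm1 | hm1
    · -- M ⊆ M2, so M = M2
      have hMsub : M ⊆ M2 := sub_of_union_disj h12u hm1
      have hM2 : M = M2 := hM.2.2 M2 h2.1 h2.2.1 hMsub
      -- M ∩ M' = ∅ with M = M2 gives M' ⊆ M1, so M' = M1
      have hM'sub : M' ⊆ M1 := sub_of_union_disj (by rw [Set.union_comm]; exact h12u)
        (by rw [← hM2]; exact hd)
      have hM1 : M' = M1 := hM'.2.2 M1 h1.1 h1.2.1 hM'sub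
      obtain ⟨w, hw1, hw2⟩ := hov
      have : w ∈ M ∩ M' := ⟨hM2 ▸ hw2, hM1 ▸ hw1⟩
      rw [hd] at this; exact this
    · by_cases hMeq : M = M1
      · -- M' ⊆ M2, M' = M2, contradict hov
        have hM'sub : M' ⊆ M2 := sub_of_union_disj h12u (by rw [← hMeq]; exact hd)
        have hM2 : M' = M2 := hM'.2.2 M2 h2.1 h2.2.1 hM'sub
        obtain ⟨w, hw1, hw2⟩ := hov
        have : w ∈ M ∩ M' := ⟨hMeq ▸ hw1, hM2 ▸ hw2⟩
        rw [hd] at this; exact this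
      · have hu : M ∪ M1 = Set.univ := mmax_union D hM h1 hMeq
          (by rw [Set.inter_comm]; exact hm1)
        have hM'sub : M' ⊆ M1 := sub_of_union_disj hu hd
        have hM1 : M' = M1 := hM'.2.2 M1 h1.1 h1.2.1 hM'sub
        obtain ⟨w, hw1, hw2⟩ := hm1
        have : w ∈ M ∩ M' := ⟨hw2, hM1 ▸ hw1⟩
        rw [hd] at this; exact this
  · exact mmax_union D hM hM' hMM' hnd

lemma mmax_exists_not_mem (D : Dissim X) [Fintype X]
    {M1 M2 : Set X} (h1 : M1 ∈ MMax D) (h2 : M2 ∈ MMax D) (h12 : M1 ≠ M2)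
    (hall : ∀ M ∈ MMax D, ∀ M' ∈ MMax D, M ≠ M' → M ∪ M' = Set.univ)
    (x : X) : ∃ M ∈ MMax D, x ∉ M := by
  by_contra hx
  push_neg at hx
  set N : Set X := {y | ∃ M ∈ MMax D, y ∉ M} with hNdef
  have key : ∀ z, (∀ M ∈ MMax D, z ∈ M) → ∀ a, ∀ Ma ∈ MMax D, a ∉ Ma →
      ∀ b, ∀ Mb ∈ MMax D, b ∉ Mb → Ma ≠ Mb → D.d z a = D.d z b := by
    intro z hz a Ma hMa ha b Mb hMb hb hab
    have hbMa : b ∈ Ma := by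
      have hu := hall Mb hMb Ma hMa (Ne.symm hab)
      rcases (hu ▸ Set.mem_univ b : b ∈ Mb ∪ Ma) with h | h
      · exact absurd h hb
      · exact h
    have haMb : a ∈ Mb := by
      have hu := hall Ma hMa Mb hMb hab
      rcases (hu ▸ Set.mem_univ a : a ∈ Ma ∪ Mb) with h | h
      · exact absurd h ha
      · exact h
    have e1 : D.d a z = D.d a b := hMa.1 a ha z (hz Ma hMa) b hbMa
    have e2 : D.d b z = D.d b a := hMb.1 b hb z (hz Mb hMb) a haMb
    rw [D.symm z a, e1, D.symm a b, ← e2, D.symm b z]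
  have hNmod : IsMmodule D N := by
    intro z hz a ha b hb
    have hzall : ∀ M ∈ MMax D, z ∈ M := by
      intro M hM
      by_contra h
      exact hz ⟨M, hM, h⟩
    obtain ⟨Ma, hMa, haM⟩ := ha
    obtain ⟨Mb, hMb, hbM⟩ := hb
    by_cases hab : Ma = Mb
    · have hMc : ∃ Mc ∈ MMax D, Mc ≠ Ma := by
        by_cases h : M1 = Ma
        · exact ⟨M2, h2, fun he => h12 (h.trans he.symm)⟩
        · exact ⟨M1, h1, h⟩
      obtain ⟨Mc, hMcm, hca⟩ := hMc
      obtain ⟨c, hc⟩ := Set.nonempty_compl.mpr hMcm.2.1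
      have e1 := key z hzall a Ma hMa haM c Mc hMcm hc (Ne.symm hca)
      have e2 := key z hzall b Mb hMb hbM c Mc hMcm hc (hab ▸ Ne.symm hca)
      rw [e1, e2]
    · exact key z hzall a Ma hMa haM b Mb hMb hbM hab
  have hNne : N ≠ Set.univ := by
    intro h
    have hxN : x ∈ N := h ▸ Set.mem_univ x
    obtain ⟨M, hM, hxM⟩ := hxN
    exact hxM (hx M hM)
  obtain ⟨Ms, hMs, hNMs⟩ := exists_max D hNmod hNne
  obtain ⟨y, hy⟩ := Set.nonempty_compl.mpr hMs.2.1
  exact hy (hNMs ⟨Ms, hMs, hy⟩)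

/-- M_max is either a partition or a copartition of X. -/
theorem stmt19 [Fintype X] [Nonempty X] (D : Dissim X)
    (hcard : 2 ≤ Fintype.card X) :
    IsPartition (MMax D) ∨ IsCopartition (MMax D) := by
  by_cases hover : ∃ M1 ∈ MMax D, ∃ M2 ∈ MMax D, M1 ≠ M2 ∧ (M1 ∩ M2).Nonempty
  · right
    obtain ⟨M1, h1, M2, h2, h12, hov⟩ := hover
    have hall := mmax_all_union D hcard h1 h2 h12 hov
    refine ⟨?_, ?_, ?_⟩
    · rintro A ⟨M, hM, rfl⟩
      exact Set.nonempty_compl.mpr hM.2.1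
    · rintro A ⟨M, hM, rfl⟩ B ⟨M', hM', rfl⟩ hAB
      have hMM' : M ≠ M' := fun h => hAB (by rw [h])
      rw [Set.disjoint_iff_inter_eq_empty, ← Set.compl_union, hall M hM M' hM' hMM',
        Set.compl_univ]
    · rw [Set.eq_univ_iff_forall]
      intro y
      obtain ⟨M, hM, hyM⟩ := mmax_exists_not_mem D h1 h2 h12 hall y
      exact ⟨Mᶜ, ⟨M, hM, rfl⟩, hyM⟩
  · left
    push_neg at hover
    refine ⟨fun M hM => mmax_nonempty D hcard hM, ?_, ?_⟩
    · intro A hA B hB hAB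
      rw [Set.disjoint_iff_inter_eq_empty]
      exact hover A hA B hB hAB
    · rw [Set.eq_univ_iff_forall]
      intro y
      obtain ⟨M, hM, hyM⟩ := exists_max D (mmod_singleton D y) (singleton_ne_univ hcard y)
      exact ⟨M, hM, hyM rfl⟩
end
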